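/- The comonad Q on k-Mod, with comonoid structure e(⟨x₀⟩) = 1, e(⟨x₀,…,xₙ⟩) = 0 for n ≥ 1, Δ(⟨x₀,…,xₙ⟩) = Σ_{I ⊆ [n]} ⟨x_I⟩ ⊗ ⟨x_{[n]∖I}⟩, and deriving transformation d : QA ⊗ A → QA given by ⟨x₀,…,xₙ⟩ ⊗ y ↦ ⟨x₀,…,xₙ, y⟩, satisfies the product rule: Δ ∘ d = ((1 ⊗ d) + (d ⊗ 1)(1 ⊗ σ)) ∘ (Δ ⊗ 1) : QA ⊗ A → QA ⊗ QA. -/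

import Mathlib

universe u

open Finset TensorProduct

/-- Unordered partitions of `Fin n` into nonempty parts, as a `Finset`. -/
def partitions (n : ℕ) : Finset (Finset (Finset (Fin n))) :=
  Finset.univ.filter fun P =>
    (∅ ∉ P) ∧ ∀ i : Fin n, (P.filter fun s => i ∈ s).card = 1

/-- Partial injections from `Fin m` to `Fin n` (partial isomorphisms `[m] ≃ [n]`). -/
def partialInjs (m n : ℕ) : Finset (Fin m → Option (Fin n)) :=
  Finset.univ.filter fun θ =>
    ∀ i j : Fin m, ∀ a : Fin n, θ i = some a → θ j = some a → i = j

/-- The arrangement (Notation 5) associated to a partial isomorphism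
`θ : [m] ≃ [n]`: the tail of the list of index pairs `x_{θ₍₁₎θ₍₂₎}`, i.e.
everything after the leading entry `(0,0)`: matched pairs `(i, θ i)`, then
unmatched rows `(i, 0)`, then unmatched columns `(0, j)`. -/
def arrangeTail (m n : ℕ) (θ : Fin m → Option (Fin n)) :
    List (Fin (m + 1) × Fin (n + 1)) :=
  ((List.finRange m).filterMap fun i => (θ i).map fun j => (i.succ, j.succ))
    ++ ((List.finRange m).filterMap fun i =>
          if θ i = none then some (i.succ, (0 : Fin (n + 1))) else none)
    ++ ((List.finRange n).filterMap fun j =>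
          if ∀ i, θ i ≠ some j then some ((0 : Fin (m + 1)), j.succ) else none)

variable (k : Type u) [CommSemiring k]

/-- The data of the comonad `Q A = ⊕_{x ∈ A} Sym(A)` on `k`-modules, presented
by its generators `⟨x₀, x₁, …, xₙ⟩` (symmetric multilinear in `x₁,…,xₙ`, but
not in `x₀`): a family of `k`-modules `Q M` together with the generator
functions. -/
structure QPre : Type (u + 1) where
  Q : ∀ (M : Type u) [AddCommMonoid M] [Module k M], Type u
  addQ : ∀ (M : Type u) [AddCommMonoid M] [Module k M], AddCommMonoid (Q M)
  modQ : ∀ (M : Type u) [AddCommMonoid M] [Module k M],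
    @Module k (Q M) inferInstance (addQ M)
  gen : ∀ (M : Type u) [AddCommMonoid M] [Module k M],
    M → (n : ℕ) → (Fin n → M) → Q M

variable {k}

instance (S : QPre k) (M : Type u) [AddCommMonoid M] [Module k M] :
    AddCommMonoid (S.Q M) := S.addQ M

instance (S : QPre k) (M : Type u) [AddCommMonoid M] [Module k M] :
    Module k (S.Q M) := S.modQ M

namespace QPre

/-- The generators `⟨x₀,…,xₙ⟩` are symmetric and multilinear in `x₁,…,xₙ`, and
`Q M` is universal among targets of such symmetric multilinear families: every
family `s x n v`, symmetric multilinear in `v`, factors uniquely through a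
`k`-linear map on `Q M`.  (This characterises `Q M = ⊕_{x ∈ M} Sym M`.) -/
def Lawful (S : QPre k) : Prop :=
  (∀ (M : Type u) [AddCommMonoid M] [Module k M] (x : M) (n : ℕ)
      (v : Fin n → M) (σ : Equiv.Perm (Fin n)),
      S.gen M x n (v ∘ σ) = S.gen M x n v) ∧
  (∀ (M : Type u) [AddCommMonoid M] [Module k M] (x : M) (n : ℕ)
      (v : Fin n → M) (i : Fin n) (a b : M),
      S.gen M x n (Function.update v i (a + b)) =
        S.gen M x n (Function.update v i a) +
          S.gen M x n (Function.update v i b)) ∧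
  (∀ (M : Type u) [AddCommMonoid M] [Module k M] (x : M) (n : ℕ)
      (v : Fin n → M) (i : Fin n) (r : k) (a : M),
      S.gen M x n (Function.update v i (r • a)) =
        r • S.gen M x n (Function.update v i a)) ∧
  (∀ (M : Type u) [AddCommMonoid M] [Module k M]
      (N : Type u) [AddCommMonoid N] [Module k N]
      (s : M → (n : ℕ) → (Fin n → M) → N),
      (∀ x n (v : Fin n → M) (σ : Equiv.Perm (Fin n)), s x n (v ∘ σ) = s x n v) →
      (∀ x n (v : Fin n → M) (i : Fin n) (a b : M),
        s x n (Function.update v i (a + b)) =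
          s x n (Function.update v i a) + s x n (Function.update v i b)) →
      (∀ x n (v : Fin n → M) (i : Fin n) (r : k) (a : M),
        s x n (Function.update v i (r • a)) =
          r • s x n (Function.update v i a)) →
      ∃! φ : S.Q M →ₗ[k] N, ∀ x n v, φ (S.gen M x n v) = s x n v)

/-- `⟨x_I⟩ = ⟨x₀, x_{i₁}, …, x_{i_k}⟩` for `I = {i₁ < … < i_k} ⊆ [n]`. -/
def genPart (S : QPre k) {M : Type u} [AddCommMonoid M] [Module k M]
    (x : M) {n : ℕ} (v : Fin n → M) (s : Finset (Fin n)) : S.Q M :=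
  S.gen M x s.card fun i => v ((s.orderIsoOfFin rfl i : Fin n))

end QPre


/-! ### Auxiliary lemmas -/

section Aux

/-- Map a subset of `Fin n` into `Fin (n+1)` via `castSucc`. -/
def mapC {n : ℕ} (I : Finset (Fin n)) : Finset (Fin (n + 1)) := I.map Fin.castSuccEmb

/-- "Inverse" of `mapC` (and of `insert (last n) ∘ mapC`). -/
def invC {n : ℕ} (J : Finset (Fin (n + 1))) : Finset (Fin n) :=
  Finset.univ.filter fun a => a.castSucc ∈ J

lemma last_not_mem_mapC {n : ℕ} (I : Finset (Fin n)) : Fin.last n ∉ mapC I := by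
  simp only [mapC, Finset.mem_map, Fin.coe_castSuccEmb]
  rintro ⟨b, -, h⟩
  exact (Fin.castSucc_lt_last b).ne h

lemma mem_mapC {n : ℕ} (I : Finset (Fin n)) (a : Fin n) : a.castSucc ∈ mapC I ↔ a ∈ I :=
  Finset.mem_map' _

lemma compl_mapC {n : ℕ} (I : Finset (Fin n)) :
    (mapC I)ᶜ = insert (Fin.last n) (mapC Iᶜ) := by
  ext a
  rcases Fin.eq_castSucc_or_eq_last a with ⟨b, rfl⟩ | rfl
  · simp [mem_mapC, (Fin.castSucc_lt_last b).ne]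
  · simp [last_not_mem_mapC]

lemma compl_insert_mapC {n : ℕ} (I : Finset (Fin n)) :
    (insert (Fin.last n) (mapC I))ᶜ = mapC Iᶜ := by
  ext a
  rcases Fin.eq_castSucc_or_eq_last a with ⟨b, rfl⟩ | rfl
  · simp [mem_mapC, (Fin.castSucc_lt_last b).ne]
  · simp [last_not_mem_mapC]

lemma invC_mapC {n : ℕ} (I : Finset (Fin n)) : invC (mapC I) = I := by
  ext a; simp [invC, mem_mapC]

lemma mapC_invC {n : ℕ} (J : Finset (Fin (n + 1))) (hJ : Fin.last n ∉ J) :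
    mapC (invC J) = J := by
  ext a
  rcases Fin.eq_castSucc_or_eq_last a with ⟨b, rfl⟩ | rfl
  · simp [invC, mem_mapC]
  · simp [last_not_mem_mapC, hJ]

lemma invC_insert_mapC {n : ℕ} (I : Finset (Fin n)) :
    invC (insert (Fin.last n) (mapC I)) = I := by
  ext a; simp [invC, mem_mapC, (Fin.castSucc_lt_last a).ne]

lemma insert_mapC_invC {n : ℕ} (J : Finset (Fin (n + 1))) (hJ : Fin.last n ∈ J) :
    insert (Fin.last n) (mapC (invC J)) = J := by
  ext a
  rcases Fin.eq_castSucc_or_eq_last a with ⟨b, rfl⟩ | rfl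
  · simp [invC, mem_mapC, (Fin.castSucc_lt_last b).ne]
  · simp [hJ]

lemma card_insert_mapC {n : ℕ} (I : Finset (Fin n)) :
    (insert (Fin.last n) (mapC I)).card = I.card + 1 := by
  rw [Finset.card_insert_of_notMem (last_not_mem_mapC I)]
  unfold mapC
  rw [Finset.card_map]

lemma QPre.gen_congr {k : Type u} [CommSemiring k] (S : QPre k) {M : Type u}
    [AddCommMonoid M] [Module k M] (x : M) {m n : ℕ} (h : m = n)
    (v : Fin m → M) (w : Fin n → M) (hv : ∀ i : Fin m, v i = w (Fin.cast h i)) :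
    S.gen M x m v = S.gen M x n w := by
  subst h
  have : v = w := funext fun i => hv i
  rw [this]

lemma enum_mapC {n : ℕ} (I : Finset (Fin n)) (i : Fin (mapC I).card) :
    (mapC I).orderEmbOfFin rfl i =
      Fin.castSucc (I.orderEmbOfFin rfl (Fin.cast (Finset.card_map _) i)) := by
  have h := Finset.orderEmbOfFin_unique (s := mapC I) (k := (mapC I).card) rfl
    (f := fun i => Fin.castSucc (I.orderEmbOfFin rfl (Fin.cast (Finset.card_map _) i)))
    (fun i => by
      unfold mapC
      rw [Finset.mem_map]
      exact ⟨_, I.orderEmbOfFin_mem rfl _, rfl⟩)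
    (fun i j hij => by
      exact Fin.castSucc_lt_castSucc_iff.mpr
        ((I.orderEmbOfFin rfl).strictMono (show Fin.cast _ i < Fin.cast _ j from hij)))
  exact (congrFun h i).symm

lemma enum_insert_mapC {n : ℕ} (I : Finset (Fin n))
    (i : Fin (insert (Fin.last n) (mapC I)).card) :
    (insert (Fin.last n) (mapC I)).orderEmbOfFin rfl i =
      Fin.snoc (α := fun _ => Fin (n+1)) (fun j : Fin I.card => Fin.castSucc (I.orderEmbOfFin rfl j)) (Fin.last n)
        (Fin.cast (card_insert_mapC I) i) := by
  have h := Finset.orderEmbOfFin_unique (s := insert (Fin.last n) (mapC I))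
    (k := (insert (Fin.last n) (mapC I)).card) rfl
    (f := fun i => Fin.snoc (α := fun _ => Fin (n+1))
      (fun j : Fin I.card => Fin.castSucc (I.orderEmbOfFin rfl j))
      (Fin.last n) (Fin.cast (card_insert_mapC I) i))
    (fun i => by
      rcases Fin.eq_castSucc_or_eq_last (Fin.cast (card_insert_mapC I) i) with ⟨j, hj⟩ | hj <;>
        rw [hj]
      · rw [Fin.snoc_castSucc]
        exact Finset.mem_insert_of_mem ((mem_mapC I _).mpr (I.orderEmbOfFin_mem rfl j))
      · rw [Fin.snoc_last]
        exact Finset.mem_insert_self _ _)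
    (fun i j hij => by
      dsimp only
      have hij' : Fin.cast (card_insert_mapC I) i < Fin.cast (card_insert_mapC I) j := hij
      rcases Fin.eq_castSucc_or_eq_last (Fin.cast (card_insert_mapC I) i) with ⟨i', hi'⟩ | hi' <;>
        rcases Fin.eq_castSucc_or_eq_last (Fin.cast (card_insert_mapC I) j) with ⟨j', hj'⟩ | hj' <;>
        rw [hi', hj'] at hij' ⊢
      · rw [Fin.snoc_castSucc, Fin.snoc_castSucc]
        exact Fin.castSucc_lt_castSucc_iff.mpr
          ((I.orderEmbOfFin rfl).strictMono (Fin.castSucc_lt_castSucc_iff.mp hij'))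
      · rw [Fin.snoc_castSucc, Fin.snoc_last]
        exact Fin.castSucc_lt_last _
      · exact absurd hij' (Fin.castSucc_lt_last j').asymm
      · exact absurd hij' (lt_irrefl _))
  exact (congrFun h i).symm

lemma genPart_mapC {k : Type u} [CommSemiring k] (S : QPre k) {M : Type u}
    [AddCommMonoid M] [Module k M] (x : M) {n : ℕ} (v : Fin n → M) (y : M)
    (I : Finset (Fin n)) :
    S.genPart x (Fin.snoc v y) (mapC I) = S.genPart x v I := by
  unfold QPre.genPart
  refine S.gen_congr x (by unfold mapC; rw [Finset.card_map]) _ _ fun i => ?_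
  rw [Finset.coe_orderIsoOfFin_apply, Finset.coe_orderIsoOfFin_apply, enum_mapC,
    Fin.snoc_castSucc]
  rfl

lemma genPart_insert_mapC {k : Type u} [CommSemiring k] (S : QPre k) {M : Type u}
    [AddCommMonoid M] [Module k M] (x : M) {n : ℕ} (v : Fin n → M) (y : M)
    (I : Finset (Fin n)) :
    S.genPart x (Fin.snoc v y) (insert (Fin.last n) (mapC I)) =
      S.gen M x (I.card + 1)
        (Fin.snoc (α := fun _ => M) (fun i => v ((I.orderIsoOfFin rfl i : Fin n))) y) := by
  unfold QPre.genPart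
  refine S.gen_congr x (card_insert_mapC I) _ _ fun i => ?_
  rw [Finset.coe_orderIsoOfFin_apply, enum_insert_mapC]
  rcases Fin.eq_castSucc_or_eq_last (Fin.cast (card_insert_mapC I) i) with ⟨j, hj⟩ | hj <;>
    rw [hj]
  · simp [Fin.snoc_castSucc, Finset.coe_orderIsoOfFin_apply]
  · simp [Fin.snoc_last]

end Aux

/-!
STATEMENT 15: The comonad `Q` on `k`-Mod, with comonoid structure
`e⟨x₀⟩ = 1`, `e⟨x₀,…,xₙ⟩ = 0` for `n ≥ 1`,
`Δ⟨x₀,…,xₙ⟩ = ∑_{I ⊆ [n]} ⟨x_I⟩ ⊗ ⟨x_{[n]∖I}⟩`, and deriving transformation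
`d : QA ⊗ A → QA`, `⟨x₀,…,xₙ⟩ ⊗ y ↦ ⟨x₀,…,xₙ,y⟩`, satisfies the product rule
`Δ ∘ d = ((1 ⊗ d) + (d ⊗ 1)(1 ⊗ σ)) ∘ (Δ ⊗ 1) : QA ⊗ A → QA ⊗ QA`, i.e. on
generators:
`Δ(d(⟨x₀,…,xₙ⟩ ⊗ y)) = ∑_{I ⊆ [n]} (⟨x_I⟩ ⊗ d(⟨x_{Iᶜ}⟩ ⊗ y) +
d(⟨x_I⟩ ⊗ y) ⊗ ⟨x_{Iᶜ}⟩)`.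
-/
theorem statement15 {k : Type u} [CommSemiring k] (S : QPre k)
    (hS : S.Lawful)
    (ΔQ : ∀ (M : Type u) [AddCommMonoid M] [Module k M],
      S.Q M →ₗ[k] (S.Q M ⊗[k] S.Q M))
    (hΔ : ∀ (M : Type u) [AddCommMonoid M] [Module k M] (x : M) (n : ℕ)
      (v : Fin n → M),
      ΔQ M (S.gen M x n v) =
        ∑ I : Finset (Fin n), S.genPart x v I ⊗ₜ[k] S.genPart x v Iᶜ)
    (eQ : ∀ (M : Type u) [AddCommMonoid M] [Module k M], S.Q M →ₗ[k] k)
    (he0 : ∀ (M : Type u) [AddCommMonoid M] [Module k M] (x : M)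
      (v : Fin 0 → M), eQ M (S.gen M x 0 v) = 1)
    (he1 : ∀ (M : Type u) [AddCommMonoid M] [Module k M] (x : M) (n : ℕ)
      (v : Fin (n + 1) → M), eQ M (S.gen M x (n + 1) v) = 0)
    (dQ : ∀ (M : Type u) [AddCommMonoid M] [Module k M],
      S.Q M →ₗ[k] M →ₗ[k] S.Q M)
    (hd : ∀ (M : Type u) [AddCommMonoid M] [Module k M] (x : M) (n : ℕ)
      (v : Fin n → M) (y : M),
      dQ M (S.gen M x n v) y = S.gen M x (n + 1) (Fin.snoc v y)) :
    ∀ (M : Type u) [AddCommMonoid M] [Module k M] (x : M) (n : ℕ)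
      (v : Fin n → M) (y : M),
      ΔQ M (dQ M (S.gen M x n v) y) =
        ∑ I : Finset (Fin n),
          (S.genPart x v I ⊗ₜ[k] dQ M (S.genPart x v Iᶜ) y +
            dQ M (S.genPart x v I) y ⊗ₜ[k] S.genPart x v Iᶜ) := by
  intro M _ _ x n v y
  classical
  rw [hd, hΔ]
  have key1 : ∀ I : Finset (Fin n),
      S.genPart x (Fin.snoc v y) (mapC I) ⊗ₜ[k] S.genPart x (Fin.snoc v y) (mapC I)ᶜ
        = S.genPart x v I ⊗ₜ[k] dQ M (S.genPart x v Iᶜ) y := by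
    intro I
    rw [compl_mapC, genPart_mapC, genPart_insert_mapC]
    congr 1
    exact (hd M x Iᶜ.card _ y).symm
  have key2 : ∀ I : Finset (Fin n),
      S.genPart x (Fin.snoc v y) (insert (Fin.last n) (mapC I)) ⊗ₜ[k]
        S.genPart x (Fin.snoc v y) (insert (Fin.last n) (mapC I))ᶜ
        = dQ M (S.genPart x v I) y ⊗ₜ[k] S.genPart x v Iᶜ := by
    intro I
    rw [compl_insert_mapC, genPart_mapC, genPart_insert_mapC]
    congr 1
    exact (hd M x I.card _ y).symm
  rw [Finset.sum_add_distrib,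
    ← Finset.sum_filter_not_add_sum_filter Finset.univ (fun J => Fin.last n ∈ J)]
  congr 1
  · refine Finset.sum_nbij' (i := invC) (j := mapC) ?_ ?_ ?_ ?_ ?_
    · intro J _; exact Finset.mem_univ _
    · intro I _
      simp [Finset.mem_filter, last_not_mem_mapC]
    · intro J hJ
      exact mapC_invC J (by simpa using (Finset.mem_filter.mp hJ).2)
    · intro I _; exact invC_mapC I
    · intro J hJ
      conv_lhs => rw [← mapC_invC J (by simpa using (Finset.mem_filter.mp hJ).2)]
      exact key1 _
  · refine Finset.sum_nbij' (i := invC) (j := fun I => insert (Fin.last n) (mapC I)) ?_ ?_ ?_ ?_ ?_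
    · intro J _; exact Finset.mem_univ _
    · intro I _
      simp [Finset.mem_filter]
    · intro J hJ
      exact insert_mapC_invC J (Finset.mem_filter.mp hJ).2
    · intro I _; exact invC_insert_mapC I
    · intro J hJ
      conv_lhs => rw [← insert_mapC_invC J (Finset.mem_filter.mp hJ).2]
      exact key2 _
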